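/- Let Π : (0,1) → ℝ be the seller expected revenue function defined from V, V_0, and λ_1, …, λ_N as in the context, with V continuously differentiable on (0,1). If r_* ∈ (0,1) is a local maximum of Π, then the first-order condition for the optimal reserve price holds: V_0 = V(r_*) − V'(r_*) · (r_* / Λ_N) · Σ_{i=1}^{N} (r_*^{−λ_i} − 1). -/

import Mathlib

/-- If `r_* ∈ (0,1)` is a local maximum of the seller expected
revenue function `Π`, then the first-order condition for the optimal reserve price
holds: `V_0 = V(r_*) − V'(r_*) (r_*/Λ_N) Σ_i (r_*^{−λ_i} − 1)`. -/
theorem optimal_reserve_price_FOC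
    (N : ℕ) (hN : 2 ≤ N) (l : Fin N → ℝ) (hl : ∀ i, 0 < l i)
    (Λ : ℝ) (hΛ : Λ = ∑ j, l j)
    (V V' : ℝ → ℝ)
    (hVcont : ContinuousOn V (Set.Icc 0 1))
    (hV' : ∀ r ∈ Set.Ioo (0:ℝ) 1, HasDerivAt V (V' r) r)
    (hV'cont : ContinuousOn V' (Set.Ioo 0 1))
    (hV'pos : ∀ r ∈ Set.Ioo (0:ℝ) 1, 0 < V' r)
    (V0 : ℝ)
    (revenue : ℝ → ℝ)
    (hrev : ∀ r, revenue r
      = V0 * r ^ Λ + V r * ∑ i, r ^ (Λ - l i) * (1 - r ^ (l i))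
        + ∫ t in r..1, V t * ((1 - (N:ℝ)) * Λ * t ^ (Λ - 1)
            + ∑ i, (Λ - l i) * t ^ (Λ - l i - 1)))
    (rs : ℝ) (hrs : rs ∈ Set.Ioo (0:ℝ) 1)
    (hmax : IsLocalMax revenue rs) :
    V0 = V rs - V' rs * (rs / Λ) * ∑ i, (rs ^ (-(l i)) - 1) := by
  obtain ⟨hx0, hx1⟩ := hrs
  have hxne : rs ≠ 0 := ne_of_gt hx0
  have hNpos : 0 < N := by omega
  have hΛpos : 0 < Λ := by
    rw [hΛ]
    exact Finset.sum_pos (fun i _ => hl i)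
      (Finset.univ_nonempty_iff.mpr (Fin.pos_iff_nonempty.mp hNpos))
  set f : ℝ → ℝ := fun t => V t * ((1 - (N:ℝ)) * Λ * t ^ (Λ - 1)
      + ∑ i, (Λ - l i) * t ^ (Λ - l i - 1)) with hf
  set G : ℝ → ℝ := fun r => V0 * r ^ Λ
      + V r * ((∑ i, r ^ (Λ - l i)) - (N:ℝ) * r ^ Λ) + ∫ t in r..1, f t with hG
  -- revenue agrees with G near rs
  have heq : ∀ r ∈ Set.Ioo (0:ℝ) 1, revenue r = G r := by
    intro r hr
    rw [hrev, hG]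
    have hsum : ∑ i, r ^ (Λ - l i) * (1 - r ^ (l i))
        = (∑ i, r ^ (Λ - l i)) - (N:ℝ) * r ^ Λ := by
      have h1 : ∀ i : Fin N, r ^ (Λ - l i) * (1 - r ^ (l i))
          = r ^ (Λ - l i) - r ^ Λ := by
        intro i
        rw [mul_sub, mul_one, ← Real.rpow_add hr.1]
        ring_nf
      rw [Finset.sum_congr rfl fun i _ => h1 i, Finset.sum_sub_distrib,
        Finset.sum_const, Finset.card_univ, Fintype.card_fin, nsmul_eq_mul]
    rw [hsum]
  have hmem : Set.Ioo (0:ℝ) 1 ∈ nhds rs := (isOpen_Ioo).mem_nhds ⟨hx0, hx1⟩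
  have heqev : revenue =ᶠ[nhds rs] G :=
    Filter.eventuallyEq_of_mem hmem heq
  -- continuity facts for f
  have hpow : ∀ (p : ℝ), ContinuousOn (fun t : ℝ => t ^ p) (Set.Ioc 0 1) := by
    intro p
    exact fun t ht =>
      (Real.continuousAt_rpow_const t p (Or.inl (ne_of_gt ht.1))).continuousWithinAt
  have hfc : ContinuousOn f (Set.Ioc 0 1) := by
    apply ContinuousOn.mul
    · exact hVcont.mono (Set.Ioc_subset_Icc_self.trans (Set.Icc_subset_Icc le_rfl le_rfl))
    · apply ContinuousOn.add
      · exact (continuousOn_const.mul (hpow (Λ - 1)))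
      · apply continuousOn_finset_sum
        intro i _
        exact continuousOn_const.mul (hpow (Λ - l i - 1))
  have hfIoo : ContinuousOn f (Set.Ioo 0 1) := hfc.mono Set.Ioo_subset_Ioc_self
  have hfint : IntervalIntegrable f MeasureTheory.volume rs 1 := by
    apply ContinuousOn.intervalIntegrable
    rw [Set.uIcc_of_le hx1.le]
    exact hfc.mono (fun t ht => ⟨lt_of_lt_of_le hx0 ht.1, ht.2⟩)
  have hfmeas : StronglyMeasurableAtFilter f (nhds rs) :=
    ContinuousOn.stronglyMeasurableAtFilter isOpen_Ioo hfIoo rs ⟨hx0, hx1⟩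
  have hfat : ContinuousAt f rs :=
    hfIoo.continuousAt hmem
  -- derivative of G at rs
  have h1 : HasDerivAt (fun r : ℝ => V0 * r ^ Λ) (V0 * (Λ * rs ^ (Λ - 1))) rs :=
    (Real.hasDerivAt_rpow_const (Or.inl hxne)).const_mul V0
  have hS : HasDerivAt (fun r : ℝ => ∑ i, r ^ (Λ - l i))
      (∑ i, (Λ - l i) * rs ^ (Λ - l i - 1)) rs :=
    HasDerivAt.fun_sum (fun i _ => Real.hasDerivAt_rpow_const (Or.inl hxne))
  have hNr : HasDerivAt (fun r : ℝ => (N:ℝ) * r ^ Λ) ((N:ℝ) * (Λ * rs ^ (Λ - 1))) rs :=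
    (Real.hasDerivAt_rpow_const (Or.inl hxne)).const_mul (N:ℝ)
  have h2 : HasDerivAt (fun r : ℝ => V r * ((∑ i, r ^ (Λ - l i)) - (N:ℝ) * r ^ Λ))
      (V' rs * ((∑ i, rs ^ (Λ - l i)) - (N:ℝ) * rs ^ Λ)
        + V rs * ((∑ i, (Λ - l i) * rs ^ (Λ - l i - 1)) - (N:ℝ) * (Λ * rs ^ (Λ - 1)))) rs :=
    (hV' rs ⟨hx0, hx1⟩).mul (hS.sub hNr)
  have h3 : HasDerivAt (fun r : ℝ => ∫ t in r..1, f t) (-f rs) rs :=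
    intervalIntegral.integral_hasDerivAt_left hfint hfmeas hfat
  have hGd : HasDerivAt G
      (V0 * (Λ * rs ^ (Λ - 1))
        + (V' rs * ((∑ i, rs ^ (Λ - l i)) - (N:ℝ) * rs ^ Λ)
          + V rs * ((∑ i, (Λ - l i) * rs ^ (Λ - l i - 1)) - (N:ℝ) * (Λ * rs ^ (Λ - 1))))
        + -f rs) rs := (h1.add h2).add h3
  have hrd : HasDerivAt revenue
      (V0 * (Λ * rs ^ (Λ - 1))
        + (V' rs * ((∑ i, rs ^ (Λ - l i)) - (N:ℝ) * rs ^ Λ)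
          + V rs * ((∑ i, (Λ - l i) * rs ^ (Λ - l i - 1)) - (N:ℝ) * (Λ * rs ^ (Λ - 1))))
        + -f rs) rs := hGd.congr_of_eventuallyEq heqev
  have hD0 := hmax.hasDerivAt_eq_zero hrd
  -- simplify using f rs
  have hB : (0:ℝ) < rs ^ (Λ - 1) := Real.rpow_pos_of_pos hx0 _
  have hBne : rs ^ (Λ - 1) ≠ 0 := ne_of_gt hB
  -- key sum identity
  have hsumid : (∑ i, rs ^ (Λ - l i)) - (N:ℝ) * rs ^ Λ
      = rs ^ Λ * ∑ i, (rs ^ (-(l i)) - 1) := by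
    rw [Finset.mul_sum]
    have h1 : ∀ i : Fin N, rs ^ Λ * (rs ^ (-(l i)) - 1) = rs ^ (Λ - l i) - rs ^ Λ := by
      intro i
      rw [mul_sub, mul_one, ← Real.rpow_add hx0, ← sub_eq_add_neg]
    rw [Finset.sum_congr rfl fun i _ => h1 i, Finset.sum_sub_distrib,
      Finset.sum_const, Finset.card_univ, Fintype.card_fin, nsmul_eq_mul]
  have hxΛ : rs ^ Λ = rs * rs ^ (Λ - 1) := by
    rw [show Λ = 1 + (Λ - 1) by ring, Real.rpow_add hx0, Real.rpow_one]
    ring_nf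
  -- derive the scalar equation
  have hkey : (V0 * Λ + V' rs * (rs * ∑ i, (rs ^ (-(l i)) - 1)) - V rs * Λ)
      * rs ^ (Λ - 1) = 0 := by
    have hfrs : f rs = V rs * ((1 - (N:ℝ)) * Λ * rs ^ (Λ - 1)
        + ∑ i, (Λ - l i) * rs ^ (Λ - l i - 1)) := rfl
    rw [hfrs, hsumid, hxΛ] at hD0
    linear_combination hD0
  have hkey2 : V0 * Λ + V' rs * (rs * ∑ i, (rs ^ (-(l i)) - 1)) - V rs * Λ = 0 := by
    rcases mul_eq_zero.mp hkey with h | h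
    · exact h
    · exact absurd h hBne
  have hΛne : Λ ≠ 0 := ne_of_gt hΛpos
  set T := ∑ i, (rs ^ (-(l i)) - 1) with hT
  field_simp
  linear_combination hkey2
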